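/- Let (C,κ) = X ∧ Y be a wedge of digital images with X ∩ Y = {x₀}, and let f: A → C', g: B → D' be functions with A ∩ B = {a₀}, C' ∩ D' = {y₀}, f(a₀) = y₀ = g(a₀), where A ∧ B and C' ∧ D' are wedges. Then f and g are both shy if and only if the map f ∧ g : A ∧ B → C' ∧ D' (equal to f on A and g on B) is shy. -/

import Mathlib

/-- A subset `A` is connected under adjacency `κ` if any two of its points are
joined by a path within `A` whose consecutive points are `κ`-adjacent. -/
def DConn {X : Type*} (κ : X → X → Prop) (A : Set X) : Prop :=
  ∀ a ∈ A, ∀ b ∈ A,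
    Relation.ReflTransGen (fun u v => κ u v ∧ u ∈ A ∧ v ∈ A) a b

/-- `f` is digitally continuous if images of connected sets are connected. -/
def DCont {X Y : Type*} (κ : X → X → Prop) (lam : Y → Y → Prop) (f : X → Y) : Prop :=
  ∀ A : Set X, DConn κ A → DConn lam (f '' A)

/-- `f` is shy: a continuous surjection with connected point preimages and
connected preimages of adjacent pairs. -/
def DShy {X Y : Type*} (κ : X → X → Prop) (lam : Y → Y → Prop) (f : X → Y) : Prop :=
  DCont κ lam f ∧ Function.Surjective f ∧
    (∀ y : Y, DConn κ (f ⁻¹' {y})) ∧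
    ∀ y₀ y₁ : Y, lam y₀ y₁ → DConn κ (f ⁻¹' {y₀, y₁})

/-- Shyness of `f` viewed as a map from the subset `S` onto the subset `T`. -/
def DShyOn {X Y : Type*} (κ : X → X → Prop) (lam : Y → Y → Prop)
    (f : X → Y) (S : Set X) (T : Set Y) : Prop :=
  (∀ s ∈ S, f s ∈ T) ∧
  (∀ A : Set X, A ⊆ S → DConn κ A → DConn lam (f '' A)) ∧
  (∀ t ∈ T, ∃ s ∈ S, f s = t) ∧
  (∀ y : Y, DConn κ (S ∩ f ⁻¹' {y})) ∧
  ∀ y₀ y₁ : Y, y₀ ∈ T → y₁ ∈ T → lam y₀ y₁ → DConn κ (S ∩ f ⁻¹' {y₀, y₁})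

section Aux
open Relation
variable {W Z : Type*}

lemma chain_mono' {κ : W → W → Prop} {P Q : Set W} (hPQ : P ⊆ Q) {a b : W}
    (hc : ReflTransGen (fun u v => κ u v ∧ u ∈ P ∧ v ∈ P) a b) :
    ReflTransGen (fun u v => κ u v ∧ u ∈ Q ∧ v ∈ Q) a b :=
  Relation.ReflTransGen.mono (p := fun u v => κ u v ∧ u ∈ Q ∧ v ∈ Q)
    (fun _ _ hx => ⟨hx.1, hPQ hx.2.1, hPQ hx.2.2⟩) _ _ hc

lemma dconn_pair {κ : W → W → Prop} (hκs : Symmetric κ) {u v : W} (huv : κ u v) :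
    DConn κ ({u, v} : Set W) := by
  have hu : u ∈ ({u, v} : Set W) := by simp
  have hv : v ∈ ({u, v} : Set W) := by simp
  intro a ha b hb
  simp only [Set.mem_insert_iff, Set.mem_singleton_iff] at ha hb
  rcases ha with rfl | rfl <;> rcases hb with rfl | rfl
  · exact .refl
  · exact .single ⟨huv, hu, hv⟩
  · exact .single ⟨hκs huv, hv, hu⟩
  · exact .refl

lemma dconn_union {κ : W → W → Prop} {P Q : Set W} {x : W} (hxP : x ∈ P) (hxQ : x ∈ Q)
    (hP : DConn κ P) (hQ : DConn κ Q) : DConn κ (P ∪ Q) := by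
  have hP' : ∀ a ∈ P, ∀ b ∈ P,
      ReflTransGen (fun u v => κ u v ∧ u ∈ P ∪ Q ∧ v ∈ P ∪ Q) a b :=
    fun a ha b hb => chain_mono' Set.subset_union_left (hP a ha b hb)
  have hQ' : ∀ a ∈ Q, ∀ b ∈ Q,
      ReflTransGen (fun u v => κ u v ∧ u ∈ P ∪ Q ∧ v ∈ P ∪ Q) a b :=
    fun a ha b hb => chain_mono' Set.subset_union_right (hQ a ha b hb)
  rintro a (ha | ha) b (hb | hb)
  · exact hP' a ha b hb
  · exact (hP' a ha x hxP).trans (hQ' x hxQ b hb)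
  · exact (hQ' a ha x hxQ).trans (hP' x hxP b hb)
  · exact hQ' a ha b hb

lemma chain_restrict {κ : W → W → Prop} (hκs : Symmetric κ)
    {A B : Set W} {a₀ : W}
    (hABu : A ∪ B = Set.univ) (hABi : A ∩ B = {a₀})
    (hwedge : ∀ x ∈ A, ∀ y ∈ B, κ x y → x = a₀ ∨ y = a₀)
    {S : Set W} {a b : W} (hb : b ∈ A)
    (hc : ReflTransGen (fun u v => κ u v ∧ u ∈ S ∧ v ∈ S) a b) :
    (a ∈ A → ReflTransGen (fun u v => κ u v ∧ u ∈ A ∩ S ∧ v ∈ A ∩ S) a b) ∧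
    (a ∈ B → ReflTransGen (fun u v => κ u v ∧ u ∈ A ∩ S ∧ v ∈ A ∩ S) a₀ b) := by
  have hmem : ∀ x : W, x ∈ A ∨ x ∈ B := fun x => by
    have hx : x ∈ A ∪ B := by rw [hABu]; trivial
    exact hx
  have heq : ∀ x : W, x ∈ A → x ∈ B → x = a₀ := fun x hxa hxb => by
    have hx : x ∈ A ∩ B := ⟨hxa, hxb⟩
    rw [hABi] at hx; exact hx
  have ha₀AB : a₀ ∈ A ∩ B := by rw [hABi]; rfl
  induction hc using Relation.ReflTransGen.head_induction_on with
  | refl =>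
    refine ⟨fun _ => .refl, fun hbB => ?_⟩
    have hb0 := heq b hb hbB
    subst hb0
    exact .refl
  | @head u c hedge htail ih =>
    obtain ⟨hκuc, huS, hcS⟩ := hedge
    constructor
    · intro huA
      by_cases hcA : c ∈ A
      · exact Relation.ReflTransGen.head ⟨hκuc, ⟨huA, huS⟩, ⟨hcA, hcS⟩⟩ (ih.1 hcA)
      · have hcB : c ∈ B := (hmem c).resolve_left hcA
        rcases hwedge u huA c hcB hκuc with h' | h'
        · rw [h']; exact ih.2 hcB
        · exact absurd (h' ▸ ha₀AB.1) hcA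
    · intro huB
      by_cases hcB : c ∈ B
      · exact ih.2 hcB
      · have hcA : c ∈ A := (hmem c).resolve_right hcB
        rcases hwedge c hcA u huB (hκs hκuc) with h' | h'
        · exact absurd (h' ▸ ha₀AB.2) hcB
        · rw [← h']
          exact Relation.ReflTransGen.head
            ⟨hκuc, ⟨h' ▸ ha₀AB.1, huS⟩, ⟨hcA, hcS⟩⟩ (ih.1 hcA)

lemma dconn_restrict {κ : W → W → Prop} (hκs : Symmetric κ)
    {A B : Set W} {a₀ : W}
    (hABu : A ∪ B = Set.univ) (hABi : A ∩ B = {a₀})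
    (hwedge : ∀ x ∈ A, ∀ y ∈ B, κ x y → x = a₀ ∨ y = a₀)
    {S : Set W} (hS : DConn κ S) : DConn κ (A ∩ S) := by
  rintro a ⟨haA, haS⟩ b ⟨hbA, hbS⟩
  exact (chain_restrict hκs hABu hABi hwedge hbA (hS a haS b hbS)).1 haA

lemma dconn_image_of_step {κ : W → W → Prop} {lam : Z → Z → Prop} {h : W → Z} {S : Set W}
    (hstep : ∀ u v : W, κ u v → u ∈ S → v ∈ S →
      Relation.ReflTransGen (fun p q => lam p q ∧ p ∈ h '' S ∧ q ∈ h '' S) (h u) (h v))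
    (hS : DConn κ S) : DConn lam (h '' S) := by
  rintro p ⟨a, ha, rfl⟩ q ⟨b, hb, rfl⟩
  have hc := hS a ha b hb
  clear hb
  induction hc with
  | refl => exact .refl
  | tail _ hst ih => exact ih.trans (hstep _ _ hst.1 hst.2.1 hst.2.2)

lemma edge_chain {κ : W → W → Prop} {lam : Z → Z → Prop} (hκs : Symmetric κ)
    {h : W → Z} {S₀ S : Set W}
    (hc : ∀ A' : Set W, A' ⊆ S₀ → DConn κ A' → DConn lam (h '' A'))
    {u v : W} (hu : u ∈ S₀) (hv : v ∈ S₀) (hu' : u ∈ S) (hv' : v ∈ S) (huv : κ u v) :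
    Relation.ReflTransGen (fun p q => lam p q ∧ p ∈ h '' S ∧ q ∈ h '' S) (h u) (h v) := by
  have hsub : ({u, v} : Set W) ⊆ S₀ := by
    rintro x hx
    simp only [Set.mem_insert_iff, Set.mem_singleton_iff] at hx
    rcases hx with rfl | rfl
    exacts [hu, hv]
  have hsub' : h '' ({u, v} : Set W) ⊆ h '' S := by
    apply Set.image_mono
    rintro x hx
    simp only [Set.mem_insert_iff, Set.mem_singleton_iff] at hx
    rcases hx with rfl | rfl
    exacts [hu', hv']
  have himg := hc {u, v} hsub (dconn_pair hκs huv)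
  have hchain := himg (h u) ⟨u, by simp, rfl⟩ (h v) ⟨v, by simp, rfl⟩
  exact Relation.ReflTransGen.mono (p := fun p q => lam p q ∧ p ∈ h '' S ∧ q ∈ h '' S)
    (fun p q hx => ⟨hx.1, hsub' hx.2.1, hsub' hx.2.2⟩) _ _ hchain



lemma pair_preimage {W Z : Type*} {κ : W → W → Prop} {lam : Z → Z → Prop}
    (hli : Irreflexive lam)
    {A B : Set W} {C D : Set Z} {a₀ : W} {y₀ : Z} {h : W → Z}
    (hABu : A ∪ B = Set.univ) (hCDi : C ∩ D = {y₀})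
    (ha₀A : a₀ ∈ A) (ha₀B : a₀ ∈ B) (h0 : h a₀ = y₀)
    (hB : ∀ b ∈ B, h b ∈ D)
    (hpairA : ∀ z₀ z₁ : Z, z₀ ∈ C → z₁ ∈ C → lam z₀ z₁ → DConn κ (A ∩ h ⁻¹' {z₀, z₁}))
    (hptB : ∀ y : Z, DConn κ (B ∩ h ⁻¹' {y}))
    {z₀ z₁ : Z} (hz₀ : z₀ ∈ C) (hz₁ : z₁ ∈ C) (hl : lam z₀ z₁) :
    DConn κ (h ⁻¹' {z₀, z₁}) := by
  have hmem : ∀ x : W, x ∈ A ∨ x ∈ B := fun x => by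
    have hx : x ∈ A ∪ B := by rw [hABu]; trivial
    exact hx
  have heqZ : ∀ z ∈ C, z ∈ D → z = y₀ := fun z hzC hzD => by
    have hz : z ∈ C ∩ D := ⟨hzC, hzD⟩
    rw [hCDi] at hz; exact hz
  have hAconn := hpairA z₀ z₁ hz₀ hz₁ hl
  by_cases h₀D : z₀ ∈ D
  · have e₀ : z₀ = y₀ := heqZ z₀ hz₀ h₀D
    have h₁D : z₁ ∉ D := by
      intro h₁D
      have e₁ : z₁ = y₀ := heqZ z₁ hz₁ h₁D
      have e : z₁ = z₀ := e₁.trans e₀.symm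
      exact hli z₀ (e ▸ hl)
    have hU : h ⁻¹' {z₀, z₁} = (A ∩ h ⁻¹' {z₀, z₁}) ∪ (B ∩ h ⁻¹' {z₀}) := by
      ext x
      simp only [Set.mem_preimage, Set.mem_union, Set.mem_inter_iff, Set.mem_insert_iff,
        Set.mem_singleton_iff]
      constructor
      · intro hx
        rcases hmem x with hxA | hxB
        · exact Or.inl ⟨hxA, hx⟩
        · refine Or.inr ⟨hxB, ?_⟩
          rcases hx with hx | hx
          · exact hx
          · exact absurd (hx ▸ hB x hxB) h₁D
      · rintro (⟨_, hx⟩ | ⟨_, hx⟩)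
        · exact hx
        · exact Or.inl hx
    rw [hU]
    refine dconn_union ⟨ha₀A, ?_⟩ ⟨ha₀B, ?_⟩ hAconn (hptB z₀)
    · simp only [Set.mem_preimage, Set.mem_insert_iff, Set.mem_singleton_iff]
      exact Or.inl (h0.trans e₀.symm)
    · simp only [Set.mem_preimage, Set.mem_singleton_iff]
      exact h0.trans e₀.symm
  · by_cases h₁D : z₁ ∈ D
    · have e₁ : z₁ = y₀ := heqZ z₁ hz₁ h₁D
      have hU : h ⁻¹' {z₀, z₁} = (A ∩ h ⁻¹' {z₀, z₁}) ∪ (B ∩ h ⁻¹' {z₁}) := by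
        ext x
        simp only [Set.mem_preimage, Set.mem_union, Set.mem_inter_iff, Set.mem_insert_iff,
          Set.mem_singleton_iff]
        constructor
        · intro hx
          rcases hmem x with hxA | hxB
          · exact Or.inl ⟨hxA, hx⟩
          · refine Or.inr ⟨hxB, ?_⟩
            rcases hx with hx | hx
            · exact absurd (hx ▸ hB x hxB) h₀D
            · exact hx
        · rintro (⟨_, hx⟩ | ⟨_, hx⟩)
          · exact hx
          · exact Or.inr hx
      rw [hU]
      refine dconn_union ⟨ha₀A, ?_⟩ ⟨ha₀B, ?_⟩ hAconn (hptB z₁)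
      · simp only [Set.mem_preimage, Set.mem_insert_iff, Set.mem_singleton_iff]
        exact Or.inr (h0.trans e₁.symm)
      · simp only [Set.mem_preimage, Set.mem_singleton_iff]
        exact h0.trans e₁.symm
    · have hU : h ⁻¹' {z₀, z₁} = A ∩ h ⁻¹' {z₀, z₁} := by
        ext x
        simp only [Set.mem_preimage, Set.mem_inter_iff, Set.mem_insert_iff,
          Set.mem_singleton_iff]
        constructor
        · intro hx
          refine ⟨?_, hx⟩
          rcases hmem x with hxA | hxB
          · exact hxA
          · exfalso
            rcases hx with hx | hx
            · exact h₀D (hx ▸ hB x hxB)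
            · exact h₁D (hx ▸ hB x hxB)
        · exact fun hx => hx.2
      rw [hU]
      exact hAconn

end Aux

theorem wedge_shy_iff {W Z : Type*}
    (κ : W → W → Prop) (lam : Z → Z → Prop)
    (hκs : Symmetric κ) (hκi : Irreflexive κ)
    (hls : Symmetric lam) (hli : Irreflexive lam)
    (A B : Set W) (C D : Set Z) (a₀ : W) (y₀ : Z)
    (hABu : A ∪ B = Set.univ) (hABi : A ∩ B = {a₀})
    (hCDu : C ∪ D = Set.univ) (hCDi : C ∩ D = {y₀})
    (hwedgeW : ∀ x ∈ A, ∀ y ∈ B, κ x y → x = a₀ ∨ y = a₀)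
    (hwedgeZ : ∀ c ∈ C, ∀ d ∈ D, lam c d → c = y₀ ∨ d = y₀)
    (h : W → Z) (hA : ∀ a ∈ A, h a ∈ C) (hB : ∀ b ∈ B, h b ∈ D)
    (h0 : h a₀ = y₀) :
    (DShyOn κ lam h A C ∧ DShyOn κ lam h B D) ↔
      DShyOn κ lam h Set.univ Set.univ := by
  have hmem : ∀ x : W, x ∈ A ∨ x ∈ B := fun x => by
    have hx : x ∈ A ∪ B := by rw [hABu]; trivial
    exact hx
  have hmemZ : ∀ z : Z, z ∈ C ∨ z ∈ D := fun z => by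
    have hz : z ∈ C ∪ D := by rw [hCDu]; trivial
    exact hz
  have heqW : ∀ x : W, x ∈ A → x ∈ B → x = a₀ := fun x hxa hxb => by
    have hx : x ∈ A ∩ B := ⟨hxa, hxb⟩
    rw [hABi] at hx; exact hx
  have heqZ : ∀ z : Z, z ∈ C → z ∈ D → z = y₀ := fun z hzc hzd => by
    have hz : z ∈ C ∩ D := ⟨hzc, hzd⟩
    rw [hCDi] at hz; exact hz
  have ha₀AB : a₀ ∈ A ∩ B := by rw [hABi]; rfl
  have hy₀CD : y₀ ∈ C ∩ D := by rw [hCDi]; rfl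
  have ha₀A : a₀ ∈ A := ha₀AB.1
  have ha₀B : a₀ ∈ B := ha₀AB.2
  have hy₀C : y₀ ∈ C := hy₀CD.1
  have hy₀D : y₀ ∈ D := hy₀CD.2
  have hABu' : B ∪ A = Set.univ := by rw [Set.union_comm]; exact hABu
  have hABi' : B ∩ A = {a₀} := by rw [Set.inter_comm]; exact hABi
  have hCDi' : D ∩ C = {y₀} := by rw [Set.inter_comm]; exact hCDi
  have hwedgeW' : ∀ x ∈ B, ∀ y ∈ A, κ x y → x = a₀ ∨ y = a₀ := fun x hx y hy hxy =>
    (hwedgeW y hy x hx (hκs hxy)).symm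
  constructor
  · rintro ⟨⟨hA1, hA2, hA3, hA4, hA5⟩, hB1, hB2, hB3, hB4, hB5⟩
    refine ⟨fun s _ => trivial, ?_, ?_, ?_, ?_⟩
    · -- continuity
      intro S _ hS
      refine dconn_image_of_step ?_ hS
      intro u v huv huS hvS
      have key : (u ∈ A ∧ v ∈ A) ∨ (u ∈ B ∧ v ∈ B) := by
        rcases hmem u with hu | hu <;> rcases hmem v with hv | hv
        · exact Or.inl ⟨hu, hv⟩
        · rcases hwedgeW u hu v hv huv with h' | h'
          · exact Or.inr ⟨by rw [h']; exact ha₀B, hv⟩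
          · exact Or.inl ⟨hu, by rw [h']; exact ha₀A⟩
        · rcases hwedgeW v hv u hu (hκs huv) with h' | h'
          · exact Or.inr ⟨hu, by rw [h']; exact ha₀B⟩
          · exact Or.inl ⟨by rw [h']; exact ha₀A, hv⟩
        · exact Or.inr ⟨hu, hv⟩
      rcases key with ⟨hu, hv⟩ | ⟨hu, hv⟩
      · exact edge_chain hκs hA2 hu hv huS hvS huv
      · exact edge_chain hκs hB2 hu hv huS hvS huv
    · -- surjectivity
      intro t _
      rcases hmemZ t with ht | ht
      · obtain ⟨s, _, hst⟩ := hA3 t ht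
        exact ⟨s, trivial, hst⟩
      · obtain ⟨s, _, hst⟩ := hB3 t ht
        exact ⟨s, trivial, hst⟩
    · -- point preimages
      intro y
      rw [Set.univ_inter]
      by_cases hyC : y ∈ C <;> by_cases hyD : y ∈ D
      · have hy : y = y₀ := heqZ y hyC hyD
        subst hy
        have hU : h ⁻¹' {y} = (A ∩ h ⁻¹' {y}) ∪ (B ∩ h ⁻¹' {y}) := by
          ext x
          constructor
          · intro hx
            rcases hmem x with h' | h'
            exacts [Or.inl ⟨h', hx⟩, Or.inr ⟨h', hx⟩]
          · rintro (⟨_, hx⟩ | ⟨_, hx⟩) <;> exact hx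
        rw [hU]
        exact dconn_union ⟨ha₀A, h0⟩ ⟨ha₀B, h0⟩ (hA4 y) (hB4 y)
      · have hU : h ⁻¹' {y} = A ∩ h ⁻¹' {y} := by
          ext x
          constructor
          · intro hx
            refine ⟨?_, hx⟩
            rcases hmem x with h' | h'
            · exact h'
            · exact absurd ((Set.mem_singleton_iff.1 hx) ▸ hB x h') hyD
          · exact fun hx => hx.2
        rw [hU]
        exact hA4 y
      · have hU : h ⁻¹' {y} = B ∩ h ⁻¹' {y} := by
          ext x
          constructor
          · intro hx
            refine ⟨?_, hx⟩
            rcases hmem x with h' | h'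
            · exact absurd ((Set.mem_singleton_iff.1 hx) ▸ hA x h') hyC
            · exact h'
          · exact fun hx => hx.2
        rw [hU]
        exact hB4 y
      · exact absurd (hmemZ y) (by simp [hyC, hyD])
    · -- pair preimages
      intro z₀ z₁ _ _ hl
      rw [Set.univ_inter]
      by_cases h₀C : z₀ ∈ C <;> by_cases h₁C : z₁ ∈ C
      · exact pair_preimage hli hABu hCDi ha₀A ha₀B h0 hB hA5 hB4 h₀C h₁C hl
      · have h₁D : z₁ ∈ D := (hmemZ z₁).resolve_left h₁C
        by_cases h₀D : z₀ ∈ D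
        · exact pair_preimage hli hABu' hCDi' ha₀B ha₀A h0 hA hB5 hA4 h₀D h₁D hl
        · rcases hwedgeZ z₀ h₀C z₁ h₁D hl with h' | h'
          · exact absurd (h' ▸ hy₀D) h₀D
          · exact absurd (h' ▸ hy₀C) h₁C
      · have h₀D : z₀ ∈ D := (hmemZ z₀).resolve_left h₀C
        by_cases h₁D : z₁ ∈ D
        · exact pair_preimage hli hABu' hCDi' ha₀B ha₀A h0 hA hB5 hA4 h₀D h₁D hl
        · rcases hwedgeZ z₁ h₁C z₀ h₀D (hls hl) with h' | h'
          · exact absurd (h' ▸ hy₀D) h₁D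
          · exact absurd (h' ▸ hy₀C) h₀C
      · have h₀D : z₀ ∈ D := (hmemZ z₀).resolve_left h₀C
        have h₁D : z₁ ∈ D := (hmemZ z₁).resolve_left h₁C
        exact pair_preimage hli hABu' hCDi' ha₀B ha₀A h0 hA hB5 hA4 h₀D h₁D hl
  · rintro ⟨h1, h2, h3, h4, h5⟩
    constructor
    · refine ⟨hA, ?_, ?_, ?_, ?_⟩
      · exact fun S _ hS => h2 S (Set.subset_univ S) hS
      · intro t htC
        obtain ⟨s, _, hst⟩ := h3 t trivial
        rcases hmem s with hsA | hsB
        · exact ⟨s, hsA, hst⟩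
        · have htD : t ∈ D := hst ▸ hB s hsB
          have ht : t = y₀ := heqZ t htC htD
          exact ⟨a₀, ha₀A, by rw [h0, ht]⟩
      · intro y
        have hy := h4 y
        rw [Set.univ_inter] at hy
        exact dconn_restrict hκs hABu hABi hwedgeW hy
      · intro z₀ z₁ _ _ hl
        have hz := h5 z₀ z₁ trivial trivial hl
        rw [Set.univ_inter] at hz
        exact dconn_restrict hκs hABu hABi hwedgeW hz
    · refine ⟨hB, ?_, ?_, ?_, ?_⟩
      · exact fun S _ hS => h2 S (Set.subset_univ S) hS
      · intro t htD
        obtain ⟨s, _, hst⟩ := h3 t trivial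
        rcases hmem s with hsA | hsB
        · have htC : t ∈ C := hst ▸ hA s hsA
          have ht : t = y₀ := heqZ t htC htD
          exact ⟨a₀, ha₀B, by rw [h0, ht]⟩
        · exact ⟨s, hsB, hst⟩
      · intro y
        have hy := h4 y
        rw [Set.univ_inter] at hy
        exact dconn_restrict hκs hABu' hABi' hwedgeW' hy
      · intro z₀ z₁ _ _ hl
        have hz := h5 z₀ z₁ trivial trivial hl
        rw [Set.univ_inter] at hz
        exact dconn_restrict hκs hABu' hABi' hwedgeW' hz
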